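/- For every angle α with 0 < α < π there exists p_0 = p_0(α) such that for every prime p ≥ p_0 there exist N ≥ 1, a Euclidean sub-p-toral set X ⊆ R^N, and three points A, B, C ∈ X with ‖A − B‖ = ‖A − C‖ > 0 and with the angle between the vectors B − A and C − A equal to α (an isosceles triangle with apex angle α contained in X). -/

import Mathlib

open Real

set_option maxHeartbeats 1000000

noncomputable def rotEquiv (θ φ : ℝ) :
    EuclideanSpace ℝ (Fin 4) ≃ₗ[ℝ] EuclideanSpace ℝ (Fin 4) where
  toFun := fun x => WithLp.toLp 2 ![cos θ * x 0 - sin θ * x 1, sin θ * x 0 + cos θ * x 1,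
    cos φ * x 2 - sin φ * x 3, sin φ * x 2 + cos φ * x 3]
  invFun := fun x => WithLp.toLp 2 ![cos θ * x 0 + sin θ * x 1, -sin θ * x 0 + cos θ * x 1,
    cos φ * x 2 + sin φ * x 3, -sin φ * x 2 + cos φ * x 3]
  map_add' := by
    intro x y
    ext i
    fin_cases i <;> simp [PiLp.add_apply] <;> ring
  map_smul' := by
    intro c x
    ext i
    fin_cases i <;> simp [PiLp.smul_apply, smul_eq_mul] <;> ring
  left_inv := by
    intro x
    ext i
    fin_cases i
    · simp; linear_combination x 0 * sin_sq_add_cos_sq θ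
    · simp; linear_combination x 1 * sin_sq_add_cos_sq θ
    · simp; linear_combination x 2 * sin_sq_add_cos_sq φ
    · simp; linear_combination x 3 * sin_sq_add_cos_sq φ
  right_inv := by
    intro x
    ext i
    fin_cases i
    · simp; linear_combination x 0 * sin_sq_add_cos_sq θ
    · simp; linear_combination x 1 * sin_sq_add_cos_sq θ
    · simp; linear_combination x 2 * sin_sq_add_cos_sq φ
    · simp; linear_combination x 3 * sin_sq_add_cos_sq φ

lemma rotEquiv_apply (θ φ : ℝ) (x : EuclideanSpace ℝ (Fin 4)) :
    rotEquiv θ φ x = WithLp.toLp 2 ![cos θ * x 0 - sin θ * x 1, sin θ * x 0 + cos θ * x 1,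
      cos φ * x 2 - sin φ * x 3, sin φ * x 2 + cos φ * x 3] := rfl

noncomputable def rotL (θ φ : ℝ) :
    EuclideanSpace ℝ (Fin 4) ≃ₗᵢ[ℝ] EuclideanSpace ℝ (Fin 4) where
  toLinearEquiv := rotEquiv θ φ
  norm_map' := by
    intro x
    rw [EuclideanSpace.norm_eq, EuclideanSpace.norm_eq]
    congr 1
    rw [rotEquiv_apply]
    simp only [PiLp.toLp_apply, Fin.sum_univ_four, Matrix.cons_val_zero, Matrix.cons_val_one, Matrix.head_cons,
      Matrix.cons_val_two, Matrix.cons_val_three, Matrix.tail_cons,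
      Real.norm_eq_abs, sq_abs]
    linear_combination (x 0 ^ 2 + x 1 ^ 2) * sin_sq_add_cos_sq θ +
      (x 2 ^ 2 + x 3 ^ 2) * sin_sq_add_cos_sq φ

noncomputable def rotI (θ φ : ℝ) :
    EuclideanSpace ℝ (Fin 4) ≃ᵢ EuclideanSpace ℝ (Fin 4) :=
  (rotL θ φ).toIsometryEquiv

lemma rotI_apply (θ φ : ℝ) (x : EuclideanSpace ℝ (Fin 4)) :
    rotI θ φ x = WithLp.toLp 2 ![cos θ * x 0 - sin θ * x 1, sin θ * x 0 + cos θ * x 1,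
      cos φ * x 2 - sin φ * x 3, sin φ * x 2 + cos φ * x 3] := rfl

lemma rotI_mul (θ φ θ' φ' : ℝ) :
    rotI θ φ * rotI θ' φ' = rotI (θ + θ') (φ + φ') := by
  apply IsometryEquiv.ext
  intro x
  have : (rotI θ φ * rotI θ' φ') x = rotI θ φ (rotI θ' φ' x) := rfl
  rw [this]
  ext i
  fin_cases i <;>
    simp only [rotI_apply, PiLp.toLp_apply, Matrix.cons_val_zero, Matrix.cons_val_one, Matrix.head_cons,
      Matrix.cons_val_two, Matrix.cons_val_three, Matrix.tail_cons, cos_add, sin_add] <;> ring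

lemma rotI_zero : rotI 0 0 = 1 := by
  apply IsometryEquiv.ext
  intro x
  have : (1 : EuclideanSpace ℝ (Fin 4) ≃ᵢ EuclideanSpace ℝ (Fin 4)) x = x := rfl
  rw [this]
  ext i
  fin_cases i <;>
    simp [rotI_apply]

lemma rotI_pow (θ φ : ℝ) (n : ℕ) :
    rotI θ φ ^ n = rotI (n * θ) (n * φ) := by
  induction n with
  | zero => simpa using rotI_zero.symm
  | succ n ih =>
    rw [pow_succ, ih, rotI_mul]
    push_cast
    ring_nf

lemma rotI_inv (θ φ : ℝ) : (rotI θ φ)⁻¹ = rotI (-θ) (-φ) := by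
  apply inv_eq_of_mul_eq_one_right
  rw [rotI_mul]
  simpa using rotI_zero

noncomputable def zmodToZPowers {G : Type*} [Group G] (p : ℕ) [NeZero p] (h : G)
    (ho : orderOf h = p) : Multiplicative (ZMod p) →* Subgroup.zpowers h where
  toFun := fun m => ⟨h ^ (Multiplicative.toAdd m).val,
    Subgroup.mem_zpowers_iff.mpr ⟨((Multiplicative.toAdd m).val : ℤ), zpow_natCast h _⟩⟩
  map_one' := by
    ext
    show h ^ (Multiplicative.toAdd (1 : Multiplicative (ZMod p))).val = 1
    rw [toAdd_one, ZMod.val_zero, pow_zero]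
  map_mul' := by
    intro a b
    ext
    show h ^ (Multiplicative.toAdd (a * b)).val
        = h ^ (Multiplicative.toAdd a).val * h ^ (Multiplicative.toAdd b).val
    have hm := pow_mod_orderOf h ((Multiplicative.toAdd a).val + (Multiplicative.toAdd b).val)
    rw [ho] at hm
    rw [toAdd_mul, ZMod.val_add, hm, pow_add]

noncomputable def zmodMulEquivZPowers {G : Type*} [Group G] (p : ℕ) [NeZero p] (h : G)
    (ho : orderOf h = p) : Multiplicative (ZMod p) ≃* Subgroup.zpowers h :=
  MulEquiv.ofBijective (zmodToZPowers p h ho)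
    (by
      constructor
      · intro a b hab
        have hab' : h ^ (Multiplicative.toAdd a).val = h ^ (Multiplicative.toAdd b).val :=
          congrArg Subtype.val hab
        rw [pow_eq_pow_iff_modEq, ho, Nat.ModEq,
          Nat.mod_eq_of_lt (ZMod.val_lt _), Nat.mod_eq_of_lt (ZMod.val_lt _)] at hab'
        exact Multiplicative.toAdd.injective (ZMod.val_injective p hab')
      · rintro ⟨x, hx⟩
        obtain ⟨k, hk⟩ := Subgroup.mem_zpowers_iff.mp hx
        refine ⟨Multiplicative.ofAdd ((k : ZMod p)), Subtype.ext ?_⟩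
        show h ^ ((k : ZMod p)).val = x
        have hz := zpow_mod_orderOf h k
        rw [ho] at hz
        rw [← hk, ← zpow_natCast, ZMod.val_intCast]
        exact hz)

def zmodFinOneAddEquiv (p : ℕ) : ZMod p ≃+ (Fin 1 → ZMod p) where
  toFun := fun a _ => a
  invFun := fun f => f 0
  left_inv := fun a => rfl
  right_inv := fun f => funext fun i => congrArg f (Subsingleton.elim 0 i)
  map_add' := fun a b => rfl

noncomputable def zpowersMulEquivFinOne {G : Type*} [Group G] (p : ℕ) [NeZero p] (h : G)
    (ho : orderOf h = p) : Subgroup.zpowers h ≃* Multiplicative (Fin 1 → ZMod p) :=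
  (zmodMulEquivZPowers p h ho).symm.trans (zmodFinOneAddEquiv p).toMultiplicative

/-- A finite set `X ⊆ ℝ^k` is *Euclidean sub-p-toral* if some isometric copy of `X`
in a possibly larger `ℝ^n` is contained in an orbit of a finite group of isometries
of `ℝ^n` isomorphic to `(ℤ/p)^α`. -/
def EuclideanSubPToral (p : ℕ) {k : ℕ} (X : Set (EuclideanSpace ℝ (Fin k))) : Prop :=
  ∃ n : ℕ, k ≤ n ∧
    ∃ ι : X → EuclideanSpace ℝ (Fin n),
      (∀ x y : X, dist (ι x) (ι y) = dist (x : EuclideanSpace ℝ (Fin k)) y) ∧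
      ∃ (G : Subgroup (EuclideanSpace ℝ (Fin n) ≃ᵢ EuclideanSpace ℝ (Fin n))) (α : ℕ),
        Nonempty (G ≃* Multiplicative (Fin α → ZMod p)) ∧
        ∃ v : EuclideanSpace ℝ (Fin n), ∀ x : X, ∃ g ∈ G,
          (g : EuclideanSpace ℝ (Fin n) ≃ᵢ EuclideanSpace ℝ (Fin n)) v = ι x

/-- **Lemma 8 (all isosceles apex angles occur in sub-p-toral sets).** For every
`0 < α < π` there is `p₀` such that for every prime `p ≥ p₀` some finite Euclidean
sub-p-toral set contains an isosceles triangle with apex angle `α`. -/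
theorem exists_subPToral_with_isosceles_triangle (α : ℝ) (hα₀ : 0 < α) (hαπ : α < π) :
    ∃ p₀ : ℕ, ∀ p : ℕ, p.Prime → p₀ ≤ p →
      ∃ N : ℕ, 1 ≤ N ∧ ∃ X : Set (EuclideanSpace ℝ (Fin N)), X.Finite ∧
        EuclideanSubPToral p X ∧
        ∃ A B C : EuclideanSpace ℝ (Fin N), A ∈ X ∧ B ∈ X ∧ C ∈ X ∧
          ‖A - B‖ = ‖A - C‖ ∧ 0 < ‖A - B‖ ∧
          InnerProductGeometry.angle (B - A) (C - A) = α := by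
  refine ⟨max 5 (max (⌈π / α⌉₊ + 1) (⌈2 * π / (π - α)⌉₊ + 1)), ?_⟩
  intro p hp hpge
  haveI : Fact p.Prime := ⟨hp⟩
  haveI : NeZero p := ⟨hp.ne_zero⟩
  have hp5 : 5 ≤ p := le_trans (le_max_left _ _) hpge
  have hpR : (0:ℝ) < p := by
    have : (0:ℕ) < p := by omega
    exact_mod_cast this
  have hπ : (0:ℝ) < π := pi_pos
  have hπα : 0 < π - α := by linarith
  have hcp1 : (⌈π / α⌉₊ + 1 : ℕ) ≤ p :=
    le_trans (le_trans (le_max_left _ _) (le_max_right _ _)) hpge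
  have hcp2 : (⌈2 * π / (π - α)⌉₊ + 1 : ℕ) ≤ p :=
    le_trans (le_trans (le_max_right _ _) (le_max_right _ _)) hpge
  have h1 : π / α < (p:ℝ) := by
    have h1a : (π / α) ≤ (⌈π / α⌉₊ : ℝ) := Nat.le_ceil _
    have h1b : ((⌈π / α⌉₊ + 1 : ℕ) : ℝ) ≤ p := by exact_mod_cast hcp1
    push_cast at h1b
    linarith
  have h2 : 2 * π / (π - α) < (p:ℝ) := by
    have h2a : (2 * π / (π - α)) ≤ (⌈2 * π / (π - α)⌉₊ : ℝ) := Nat.le_ceil _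
    have h2b : ((⌈2 * π / (π - α)⌉₊ + 1 : ℕ) : ℝ) ≤ p := by exact_mod_cast hcp2
    push_cast at h2b
    linarith
  have hπpα : π / p < α := by
    rw [div_lt_iff₀ hpR]
    have := (div_lt_iff₀ hα₀).mp h1
    nlinarith
  have h2πp : 2 * π / p < π - α := by
    rw [div_lt_iff₀ hpR]
    have := (div_lt_iff₀ hπα).mp h2
    nlinarith
  set θ : ℝ := 2 * π / p with hθdef
  have hθ0 : 0 < θ := by positivity
  have hθπ : θ < π := by
    have : θ < π - α := h2πp
    linarith
  have hodd : p % 2 = 1 := Nat.odd_iff.mp (hp.odd_of_ne_two (by omega))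
  set m : ℕ := (p - 1) / 2 with hmdef
  have hm2 : 2 * m = p - 1 := by omega
  have hmR : 2 * (m:ℝ) = (p:ℝ) - 1 := by
    have : ((2 * m : ℕ) : ℝ) = ((p - 1 : ℕ) : ℝ) := by exact_mod_cast congrArg (Nat.cast (R := ℝ)) hm2
    rwa [Nat.cast_mul, Nat.cast_ofNat, Nat.cast_sub (by omega : 1 ≤ p), Nat.cast_one] at this
  set φ : ℝ := 2 * π * m / p with hφdef
  have hφeq : φ = π - π / p := by
    rw [hφdef]
    field_simp
    nlinarith [hmR]
  have hc2 : cos φ = -cos (π / p) := by rw [hφeq, cos_pi_sub]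
  have hπp0 : 0 < π / p := by positivity
  have hA : cos α < cos (π / p) :=
    cos_lt_cos_of_nonneg_of_le_pi hπp0.le hαπ.le hπpα
  have hB : -cos θ < cos α := by
    have h' : cos (π - θ) < cos α :=
      cos_lt_cos_of_nonneg_of_le_pi hα₀.le (by linarith) (by linarith)
    rwa [cos_pi_sub] at h'
  have hc1lt1 : cos θ < 1 := by
    have h' : cos θ < cos 0 := cos_lt_cos_of_nonneg_of_le_pi (le_refl 0) hθπ.le hθ0
    rwa [cos_zero] at h'
  set t : ℝ := cos α with htdef
  have hCθ : cos φ < cos θ := by rw [hc2]; linarith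
  set lam : ℝ := (-t - cos φ) / (cos θ - cos φ) with hlamdef
  have hd0 : 0 < cos θ - cos φ := by linarith
  have hnum : 0 < -t - cos φ := by rw [hc2]; simp only [htdef]; linarith
  have hlam0 : 0 < lam := div_pos hnum hd0
  have hlam1 : lam < 1 := (div_lt_one hd0).mpr (by linarith)
  have hlam' : lam * (cos θ - cos φ) = -t - cos φ := div_mul_cancel₀ _ hd0.ne'
  have h1c1 : 0 < 1 - cos θ := by linarith
  have h1c2 : 0 < 1 - cos φ := by linarith
  set r : ℝ := Real.sqrt (lam / (1 - cos θ)) with hrdef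
  set s : ℝ := Real.sqrt ((1 - lam) / (1 - cos φ)) with hsdef
  have hr0 : 0 < r := Real.sqrt_pos.mpr (div_pos hlam0 h1c1)
  have hs0 : 0 < s := Real.sqrt_pos.mpr (div_pos (by linarith) h1c2)
  have hr2 : r ^ 2 * (1 - cos θ) = lam := by
    rw [hrdef, Real.sq_sqrt (div_pos hlam0 h1c1).le, div_mul_cancel₀ _ h1c1.ne']
  have hs2' : s ^ 2 * (1 - cos φ) = 1 - lam := by
    rw [hsdef, Real.sq_sqrt (div_pos (by linarith) h1c2).le, div_mul_cancel₀ _ h1c2.ne']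
  have p1 := sin_sq_add_cos_sq θ
  have p2 := sin_sq_add_cos_sq φ
  -- the three points
  set v : EuclideanSpace ℝ (Fin 4) := WithLp.toLp 2 ![r, 0, s, 0] with hvdef
  set vB : EuclideanSpace ℝ (Fin 4) :=
    WithLp.toLp 2 ![cos θ * r, sin θ * r, cos φ * s, sin φ * s] with hvBdef
  set vC : EuclideanSpace ℝ (Fin 4) :=
    WithLp.toLp 2 ![cos θ * r, -(sin θ * r), cos φ * s, -(sin φ * s)] with hvCdef
  have hBco : rotI θ φ v = vB := by
    ext i
    fin_cases i <;>
      simp [rotI_apply, hvdef, hvBdef] <;> ring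
  have hCco : rotI (-θ) (-φ) v = vC := by
    ext i
    fin_cases i <;>
      simp [rotI_apply, hvdef, hvCdef, cos_neg, sin_neg] <;> ring
  -- norms
  have keyB : ∑ i : Fin 4, ‖(v - vB) i‖ ^ 2 = 2 := by
    simp only [Fin.sum_univ_four, PiLp.sub_apply, PiLp.toLp_apply, hvdef, hvBdef,
      Matrix.cons_val_zero, Matrix.cons_val_one, Matrix.head_cons,
      Matrix.cons_val_two, Matrix.cons_val_three, Matrix.tail_cons,
      Real.norm_eq_abs, sq_abs]
    linear_combination 2 * hr2 + 2 * hs2' + r ^ 2 * p1 + s ^ 2 * p2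
  have keyC : ∑ i : Fin 4, ‖(v - vC) i‖ ^ 2 = 2 := by
    simp only [Fin.sum_univ_four, PiLp.sub_apply, PiLp.toLp_apply, hvdef, hvCdef,
      Matrix.cons_val_zero, Matrix.cons_val_one, Matrix.head_cons,
      Matrix.cons_val_two, Matrix.cons_val_three, Matrix.tail_cons,
      Real.norm_eq_abs, sq_abs]
    linear_combination 2 * hr2 + 2 * hs2' + r ^ 2 * p1 + s ^ 2 * p2
  have hnAB : ‖v - vB‖ = Real.sqrt 2 := by
    rw [EuclideanSpace.norm_eq]
    rw [keyB]
  have hnAC : ‖v - vC‖ = Real.sqrt 2 := by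
    rw [EuclideanSpace.norm_eq]
    rw [keyC]
  have hinner : (inner ℝ (vB - v) (vC - v) : ℝ) = 2 * t := by
    rw [PiLp.inner_apply]
    simp only [RCLike.inner_apply, conj_trivial, Fin.sum_univ_four, PiLp.sub_apply, PiLp.toLp_apply,
      hvdef, hvBdef, hvCdef,
      Matrix.cons_val_zero, Matrix.cons_val_one, Matrix.head_cons,
      Matrix.cons_val_two, Matrix.cons_val_three, Matrix.tail_cons]
    linear_combination (-2 * cos θ) * hr2 + (-2 * cos φ) * hs2' +
      (-(r ^ 2)) * p1 + (-(s ^ 2)) * p2 + (-2) * hlam'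
  have hangle : InnerProductGeometry.angle (vB - v) (vC - v) = α := by
    unfold InnerProductGeometry.angle
    rw [hinner, show ‖vB - v‖ = Real.sqrt 2 by rw [norm_sub_rev]; exact hnAB,
      show ‖vC - v‖ = Real.sqrt 2 by rw [norm_sub_rev]; exact hnAC,
      Real.mul_self_sqrt (by norm_num : (0:ℝ) ≤ 2)]
    rw [show (2 * t) / 2 = t by ring, htdef]
    exact Real.arccos_cos hα₀.le hαπ.le
  -- order of the rotation
  have hppow : rotI θ φ ^ p = 1 := by
    rw [rotI_pow]
    have e1 : (p:ℝ) * θ = 2 * π := by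
      rw [hθdef]
      field_simp
    have e2 : (p:ℝ) * φ = (m:ℝ) * (2 * π) := by
      rw [hφdef]
      field_simp
    rw [e1, e2]
    have hcm : cos ((m:ℝ) * (2 * π)) = 1 := cos_nat_mul_two_pi m
    have hsm : sin ((m:ℝ) * (2 * π)) = 0 := by
      have h' := sin_nat_mul_pi (2 * m)
      push_cast at h'
      rw [show (m:ℝ) * (2 * π) = 2 * (m:ℝ) * π by ring]
      exact h'
    apply IsometryEquiv.ext
    intro x
    have hone : (1 : EuclideanSpace ℝ (Fin 4) ≃ᵢ EuclideanSpace ℝ (Fin 4)) x = x := rfl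
    rw [hone]
    ext i
    fin_cases i <;> simp [rotI_apply, cos_two_pi, sin_two_pi, hcm, hsm]
  have hne1 : rotI θ φ ≠ 1 := by
    intro hcon
    have happ : rotI θ φ v = v := by rw [hcon]; rfl
    have h1' : (rotI θ φ v) 1 = v 1 := by rw [happ]
    rw [rotI_apply] at h1'
    simp [hvdef] at h1'
    have hsinθ : 0 < sin θ := sin_pos_of_pos_of_lt_pi hθ0 hθπ
    rcases h1' with h1' | h1'
    · exact hsinθ.ne' h1'
    · exact hr0.ne' h1'
  have hporder : orderOf (rotI θ φ) = p := orderOf_eq_prime hppow hne1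
  refine ⟨4, by norm_num, {v, vB, vC}, ?_, ?_, v, vB, vC, ?_, ?_, ?_, ?_, ?_, ?_⟩
  · exact (Set.finite_singleton _).insert _ |>.insert _
  · refine ⟨4, le_refl 4, fun x => x.1, fun x y => rfl,
      Subgroup.zpowers (rotI θ φ), 1, ⟨zpowersMulEquivFinOne p (rotI θ φ) hporder⟩, v, ?_⟩
    rintro ⟨x, hx⟩
    simp only [Set.mem_insert_iff, Set.mem_singleton_iff] at hx
    rcases hx with rfl | rfl | rfl
    · exact ⟨1, one_mem _, rfl⟩
    · exact ⟨rotI θ φ, Subgroup.mem_zpowers _, hBco⟩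
    · refine ⟨(rotI θ φ)⁻¹, inv_mem (Subgroup.mem_zpowers _), ?_⟩
      rw [rotI_inv]
      exact hCco
  · exact Set.mem_insert _ _
  · exact Set.mem_insert_iff.mpr (Or.inr (Set.mem_insert _ _))
  · exact Set.mem_insert_iff.mpr (Or.inr (Set.mem_insert_iff.mpr (Or.inr rfl)))
  · rw [hnAB, hnAC]
  · rw [hnAB]
    exact Real.sqrt_pos.mpr (by norm_num)
  · exact hangle
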